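/- Let n ≥ 2 and f(k) = n^k − 1. Then for every d ≥ 1 and μ ≥ 0, 𝒩(d,μ,f) = (n−1)^d · Σ_{k=0}^{μ} C(d+k−1, k) · C(d+μ−k−1, μ−k) · n^k. -/

import Mathlib

/-- Multi-indices `i : Fin d → ℕ` with `i k ≥ 1` for all `k` and `∑ k, i k = d + μ`. -/
def smolyakIndices (d μ : ℕ) : Finset (Fin d → ℕ) :=
  (Fintype.piFinset fun _ => Finset.Icc 1 (d + μ)).filter fun i => ∑ k, i k = d + μ

/-- `𝒩(d, μ, f) = ∑_{|i| = d + μ, i ≥ 1} ∏ₖ f(iₖ)`. -/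
def calN (f : ℕ → ℕ) (d μ : ℕ) : ℕ :=
  ∑ i ∈ smolyakIndices d μ, ∏ k, f (i k)

lemma aux_geom (n : ℕ) (hn : 1 ≤ n) (m : ℕ) :
    n ^ m - 1 = (n - 1) * ∑ j ∈ Finset.range m, n ^ j := by
  induction m with
  | zero => simp
  | succ m ih =>
    have h1 : 1 ≤ n ^ m := Nat.one_le_pow _ _ hn
    have h2 : n ^ m ≤ n ^ (m + 1) := Nat.pow_le_pow_right hn (by omega)
    have h3 : (n - 1) * n ^ m = n ^ (m + 1) - n ^ m := by
      rw [Nat.sub_mul, one_mul, ← pow_succ']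
    rw [Finset.sum_range_succ, Nat.mul_add, ← ih, h3]
    omega

lemma aux_sum_choose (d m : ℕ) :
    ∑ b ∈ Finset.range (m + 1), (b + d - 1).choose b = (m + d).choose m := by
  induction m with
  | zero => simp
  | succ m ih =>
    rw [Finset.sum_range_succ, ih]
    have h1 : m + 1 + d - 1 = m + d := by omega
    have h2 : m + 1 + d = (m + d) + 1 := by omega
    rw [h1, h2, Nat.choose_succ_succ]

lemma card_antidiagonalTuple : ∀ d m : ℕ,
    (Finset.Nat.antidiagonalTuple d m).card = (m + d - 1).choose m := by
  intro d
  induction d with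
  | zero =>
    intro m
    cases m with
    | zero => simp
    | succ m => simp [Nat.choose_eq_zero_of_lt]
  | succ d ih =>
    intro m
    have key : (Finset.Nat.antidiagonalTuple (d + 1) m).card
        = ((Finset.range (m + 1)).sigma
            (fun b => Finset.Nat.antidiagonalTuple d b)).card := by
      apply Finset.card_nbij'
        (fun (x : Fin (d+1) → ℕ) => (⟨∑ t : Fin d, x t.succ, Fin.tail x⟩ : Σ _ : ℕ, Fin d → ℕ))
        (fun (y : Σ _ : ℕ, Fin d → ℕ) => Fin.cons (m - y.1) y.2)
      · intro x hx
        rw [Finset.mem_coe, Finset.Nat.mem_antidiagonalTuple, Fin.sum_univ_succ] at hx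
        simp only [Finset.mem_coe, Finset.mem_sigma, Finset.mem_range, Finset.Nat.mem_antidiagonalTuple]
        exact ⟨by omega, rfl⟩
      · intro y hy
        simp only [Finset.mem_coe, Finset.mem_sigma, Finset.mem_range,
          Finset.Nat.mem_antidiagonalTuple] at hy
        rw [Finset.mem_coe, Finset.Nat.mem_antidiagonalTuple, Fin.sum_univ_succ]
        simp only [Fin.cons_zero, Fin.cons_succ]
        rw [hy.2]
        omega
      · intro x hx
        rw [Finset.mem_coe, Finset.Nat.mem_antidiagonalTuple, Fin.sum_univ_succ] at hx
        have h0 : m - ∑ t : Fin d, x t.succ = x 0 := by omega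
        show Fin.cons (m - ∑ t : Fin d, x t.succ) (Fin.tail x) = x
        rw [h0, Fin.cons_self_tail]
      · intro y hy
        simp only [Finset.mem_coe, Finset.mem_sigma, Finset.mem_range,
          Finset.Nat.mem_antidiagonalTuple] at hy
        obtain ⟨b, y2⟩ := y
        simp only [Fin.cons_succ, Fin.tail_cons]
        exact congrArg (fun s => (⟨s, y2⟩ : Σ _ : ℕ, Fin d → ℕ)) hy.2
    rw [key, Finset.card_sigma]
    have hstep : ∀ b ∈ Finset.range (m + 1),
        (Finset.Nat.antidiagonalTuple d b).card = (b + d - 1).choose b :=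
      fun b _ => ih b
    rw [Finset.sum_congr rfl hstep, aux_sum_choose]
    have : m + (d + 1) - 1 = m + d := by omega
    rw [this]

/-- For `f(k) = nᵏ - 1` (with `n ≥ 2`),
`𝒩(d, μ, f) = (n-1)^d · ∑_{k=0}^{μ} C(d+k-1, k) C(d+μ-k-1, μ-k) nᵏ`. -/
theorem calN_of_pow_sub_one (n : ℕ) (hn : 2 ≤ n) (d μ : ℕ) (hd : 1 ≤ d) :
    calN (fun k => n ^ k - 1) d μ =
      (n - 1) ^ d * ∑ k ∈ Finset.range (μ + 1),
        (d + k - 1).choose k * (d + μ - k - 1).choose (μ - k) * n ^ k := by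
  have hn1 : 1 ≤ n := by omega
  unfold calN
  -- Step 1: expand each product as (n-1)^d times a sum over sub-tuples
  have hstep : ∀ i ∈ smolyakIndices d μ,
      (∏ k, (fun k => n ^ k - 1) (i k)) =
      (n - 1) ^ d * ∑ j ∈ Fintype.piFinset (fun k => Finset.range (i k)), n ^ (∑ k, j k) := by
    intro i _
    simp only
    calc ∏ k, (n ^ i k - 1)
        = ∏ k : Fin d, ((n - 1) * ∑ j ∈ Finset.range (i k), n ^ j) :=
          Finset.prod_congr rfl fun k _ => aux_geom n hn1 (i k)
      _ = (n - 1) ^ d * ∏ k : Fin d, ∑ j ∈ Finset.range (i k), n ^ j := by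
          rw [Finset.prod_mul_distrib, Finset.prod_const, Finset.card_univ, Fintype.card_fin]
      _ = (n - 1) ^ d * ∑ j ∈ Fintype.piFinset (fun k => Finset.range (i k)), n ^ (∑ k, j k) := by
          rw [Finset.prod_univ_sum]
          congr 1
          exact Finset.sum_congr rfl fun x _ => Finset.prod_pow_eq_pow_sum _ _ _
  rw [Finset.sum_congr rfl hstep, ← Finset.mul_sum]
  congr 1
  rw [← Finset.sum_sigma (smolyakIndices d μ)
    (fun i => Fintype.piFinset fun k => Finset.range (i k))
    (fun (x : Σ _ : Fin d → ℕ, Fin d → ℕ) => n ^ (∑ k, x.2 k))]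
  -- membership facts for the sigma set
  have hmem : ∀ x : Σ _ : Fin d → ℕ, Fin d → ℕ,
      x ∈ (smolyakIndices d μ).sigma (fun i => Fintype.piFinset fun k => Finset.range (i k)) →
      (∑ t, x.1 t = d + μ) ∧ (∀ t, x.2 t < x.1 t) ∧ (∑ t, x.2 t ≤ μ) := by
    intro x hx
    rw [Finset.mem_sigma] at hx
    obtain ⟨h1, h2⟩ := hx
    rw [smolyakIndices, Finset.mem_filter] at h1
    rw [Fintype.mem_piFinset] at h2
    have hlt : ∀ t, x.2 t < x.1 t := fun t => Finset.mem_range.mp (h2 t)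
    refine ⟨h1.2, hlt, ?_⟩
    have hss : ∑ t, (x.2 t + 1) ≤ ∑ t, x.1 t :=
      Finset.sum_le_sum fun t _ => hlt t
    rw [Finset.sum_add_distrib, Finset.sum_const, Finset.card_univ, Fintype.card_fin,
      h1.2, smul_eq_mul, mul_one] at hss
    omega
  have hmaps : ∀ x ∈ (smolyakIndices d μ).sigma
      (fun i => Fintype.piFinset fun k => Finset.range (i k)),
      (fun (x : Σ _ : Fin d → ℕ, Fin d → ℕ) => ∑ t, x.2 t) x ∈ Finset.range (μ + 1) := by
    intro x hx
    have := (hmem x hx).2.2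
    simp only [Finset.mem_range]
    omega
  rw [← Finset.sum_fiberwise_of_maps_to hmaps
    (fun (x : Σ _ : Fin d → ℕ, Fin d → ℕ) => n ^ (∑ k, x.2 k))]
  apply Finset.sum_congr rfl
  intro k hk
  have hkμ : k ≤ μ := by rw [Finset.mem_range] at hk; omega
  -- inner sum is constant n^k on the fiber
  have hconst : ∀ x ∈ ((smolyakIndices d μ).sigma
      (fun i => Fintype.piFinset fun k => Finset.range (i k))).filter
      (fun x => ∑ t, x.2 t = k), n ^ (∑ t, x.2 t) = n ^ k := by
    intro x hx
    rw [Finset.mem_filter] at hx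
    rw [hx.2]
  rw [Finset.sum_congr rfl hconst, Finset.sum_const, smul_eq_mul]
  congr 1
  -- the fiber is in bijection with AT d k × AT d (μ-k)
  have hcard : (((smolyakIndices d μ).sigma
      (fun i => Fintype.piFinset fun k => Finset.range (i k))).filter
      (fun x => ∑ t, x.2 t = k)).card =
      ((Finset.Nat.antidiagonalTuple d k) ×ˢ (Finset.Nat.antidiagonalTuple d (μ - k))).card := by
    apply Finset.card_nbij'
      (fun (x : Σ _ : Fin d → ℕ, Fin d → ℕ) => (x.2, fun t => x.1 t - x.2 t - 1))
      (fun (p : (Fin d → ℕ) × (Fin d → ℕ)) =>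
        (⟨fun t => p.1 t + p.2 t + 1, p.1⟩ : Σ _ : Fin d → ℕ, Fin d → ℕ))
    · intro x hx
      rw [Finset.mem_coe, Finset.mem_filter] at hx
      obtain ⟨hi, hj, hle⟩ := hmem x hx.1
      simp only [Finset.mem_coe, Finset.mem_product, Finset.Nat.mem_antidiagonalTuple]
      refine ⟨hx.2, ?_⟩
      have heq : ∀ t, (x.1 t - x.2 t - 1) + (x.2 t + 1) = x.1 t := fun t => by
        have := hj t; omega
      have hsum : ∑ t, ((x.1 t - x.2 t - 1) + (x.2 t + 1)) = d + μ := by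
        rw [Finset.sum_congr rfl fun t _ => heq t]; exact hi
      rw [Finset.sum_add_distrib, Finset.sum_add_distrib, Finset.sum_const,
        Finset.card_univ, Fintype.card_fin, hx.2, smul_eq_mul, mul_one] at hsum
      omega
    · intro p hp
      rw [Finset.mem_coe, Finset.mem_product, Finset.Nat.mem_antidiagonalTuple,
        Finset.Nat.mem_antidiagonalTuple] at hp
      obtain ⟨hp1, hp2⟩ := hp
      have hsum : ∑ t, (p.1 t + p.2 t + 1) = d + μ := by
        rw [Finset.sum_add_distrib, Finset.sum_add_distrib, Finset.sum_const,
          Finset.card_univ, Fintype.card_fin, hp1, hp2, smul_eq_mul, mul_one]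
        omega
      simp only [Finset.mem_coe, Finset.mem_filter, Finset.mem_sigma]
      refine ⟨⟨?_, ?_⟩, hp1⟩
      · rw [smolyakIndices, Finset.mem_filter]
        refine ⟨?_, hsum⟩
        rw [Fintype.mem_piFinset]
        intro t
        rw [Finset.mem_Icc]
        refine ⟨by omega, ?_⟩
        calc p.1 t + p.2 t + 1 ≤ ∑ s, (p.1 s + p.2 s + 1) :=
              Finset.single_le_sum (f := fun s => p.1 s + p.2 s + 1)
                (fun s _ => Nat.zero_le _) (Finset.mem_univ t)
          _ = d + μ := hsum
      · rw [Fintype.mem_piFinset]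
        intro t
        simp only [Finset.mem_range]
        omega
    · intro x hx
      rw [Finset.mem_coe, Finset.mem_filter] at hx
      obtain ⟨hi, hj, hle⟩ := hmem x hx.1
      obtain ⟨x1, x2⟩ := x
      simp only at hj
      have hfun : (fun t => x2 t + (x1 t - x2 t - 1) + 1) = x1 := by
        funext t
        have := hj t
        omega
      exact congrArg (fun a => (⟨a, x2⟩ : Σ _ : Fin d → ℕ, Fin d → ℕ)) hfun
    · intro p hp
      obtain ⟨p1, p2⟩ := p
      have hfun : (fun t => p1 t + p2 t + 1 - p1 t - 1) = p2 := by
        funext t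
        omega
      exact congrArg (fun f => (p1, f)) hfun
  rw [hcard, Finset.card_product, card_antidiagonalTuple, card_antidiagonalTuple]
  have h1 : k + d - 1 = d + k - 1 := by clear * - hkμ hd; omega
  have h2 : μ - k + d - 1 = d + μ - k - 1 := by clear * - hkμ hd; omega
  rw [h1, h2]
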